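/- Let T be a valid chiral merge tree and let r ≤ t be real numbers. Then the cardinality of S_T(t) equals the number of intervals I ∈ Elder(T) with t ∈ I, and the cardinality of the image of the shift map σ_{tr} : S_T(r) → S_T(t) equals the number of intervals I ∈ Elder(T) containing both r and t. -/

import Mathlib

open scoped Classical

/-- Chiral merge trees: binary trees with a real label at every node,
and a left/right ordering of the children of each internal node. -/
inductive CMT : Type where
  | leaf (a : ℝ) : CMT
  | node (a : ℝ) (l r : CMT) : CMT

namespace CMT

/-- The label of the root of a chiral merge tree. -/
def label : CMT → ℝ
  | leaf a => a
  | node a _ _ => a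

/-- The minimum leaf label of a chiral merge tree. -/
def minLeaf : CMT → ℝ
  | leaf a => a
  | node _ l r => min (minLeaf l) (minLeaf r)

/-- The list of all labels of nodes of a chiral merge tree. -/
def labelList : CMT → List ℝ
  | leaf a => [a]
  | node a l r => a :: (labelList l ++ labelList r)

/-- In every subtree `node a l r`, the root labels of `l` and `r` are `< a`. -/
def LocalValid : CMT → Prop
  | leaf _ => True
  | node a l r => label l < a ∧ label r < a ∧ LocalValid l ∧ LocalValid r

/-- A chiral merge tree is valid if its labels are pairwise distinct and in every
subtree `node a l r` the root labels of `l` and `r` are strictly less than `a`. -/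
def Valid (T : CMT) : Prop := T.labelList.Nodup ∧ T.LocalValid

/-- The Elder barcode of a chiral merge tree: `Elder (leaf a) = {[a,∞)}`; for
`node a l r`, with `m` the larger of the two minimum leaf labels of `l` and `r`,
the unbounded bar `[m,∞)` of `Elder l ∪ Elder r` is replaced by `[m, a)`. -/
def Elder : CMT → Set (Set ℝ)
  | leaf a => {Set.Ici a}
  | node a l r =>
      insert (Set.Ico (max (minLeaf l) (minLeaf r)) a)
        ((Elder l ∪ Elder r) \ {Set.Ici (max (minLeaf l) (minLeaf r))})

/-- The subtree of a chiral merge tree at the address `w` (a word in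
`{L,R}`, encoded as `false`/`true`), if it exists. -/
def subtree? : CMT → List Bool → Option CMT
  | t, [] => some t
  | leaf _, _ :: _ => none
  | node _ l _, false :: w => subtree? l w
  | node _ _ r, true :: w => subtree? r w

/-- The label of the node of `T` at the address `w`, if such a node exists. -/
def nodeLabel? (T : CMT) (w : List Bool) : Option ℝ := (T.subtree? w).map label

/-- `T.MemS t w` means: `w` is the address of a node `v` of `T` with label `≤ t`
whose parent, if it exists, has label `> t`.  Thus `S_T(t) = {w // T.MemS t w}`. -/
def MemS (T : CMT) (t : ℝ) (w : List Bool) : Prop :=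
  (∃ a, T.nodeLabel? w = some a ∧ a ≤ t) ∧
  (∀ a, w ≠ [] → T.nodeLabel? w.dropLast = some a → t < a)

/-- The in-order (left subtree, root, right subtree) traversal of the node
addresses of a chiral merge tree. -/
def addrList : CMT → List (List Bool)
  | leaf _ => [[]]
  | node _ l r =>
      (addrList l).map (List.cons false) ++ [[]] ++ (addrList r).map (List.cons true)

/-- The node at address `u` strictly precedes the node at address `v`
in the in-order order on the nodes of `T`. -/
def InOrderLT (T : CMT) (u v : List Bool) : Prop :=
  T.addrList.idxOf u < T.addrList.idxOf v

/-- The node at address `u` precedes or equals the node at address `v`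
in the in-order order on the nodes of `T`. -/
def InOrderLE (T : CMT) (u v : List Bool) : Prop :=
  T.addrList.idxOf u ≤ T.addrList.idxOf v

/-- The number of nodes of a chiral merge tree. -/
def numNodes : CMT → ℕ
  | leaf _ => 1
  | node _ l r => 1 + numNodes l + numNodes r

/-- The number of leaves of a chiral merge tree. -/
def numLeaves : CMT → ℕ
  | leaf _ => 1
  | node _ l r => numLeaves l + numLeaves r

/-- The set of labels of leaves of a chiral merge tree. -/
def leafLabels : CMT → Set ℝ
  | leaf a => {a}
  | node _ l r => leafLabels l ∪ leafLabels r

/-- The set of labels of internal (binary) nodes of a chiral merge tree. -/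
def internalLabels : CMT → Set ℝ
  | leaf _ => ∅
  | node a l r => insert a (internalLabels l ∪ internalLabels r)

/-- The in-order traversal list of the nodes (as subtrees) of a chiral merge tree. -/
def trav : CMT → List CMT
  | leaf a => [leaf a]
  | node a l r => trav l ++ [node a l r] ++ trav r

/-- Whether a node is a leaf. -/
def isLeaf : CMT → Prop
  | leaf _ => True
  | node _ _ _ => False

end CMT
/-- The `j`-th bar of the barcode: `I₁ = [b₁, ∞)` (index `0`) and
`I_j = [b_j, d_j)` for `j ≥ 2` (indices `≠ 0`). -/
def bar {N : ℕ} (b d : Fin N → ℝ) (j : Fin N) : Set ℝ :=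
  if (j : ℕ) = 0 then Set.Ici (b j) else Set.Ico (b j) (d j)

/-- The barcode `B = {I₁, …, I_N}` as a set of intervals. -/
def barcodeOf {N : ℕ} (b d : Fin N → ℝ) : Set (Set ℝ) := Set.range (bar b d)

/-- `μ_B(I_j)`: the number of indices `k` with `I_j` strictly contained in `I_k`. -/
noncomputable def mu {N : ℕ} (b d : Fin N → ℝ) (j : Fin N) : ℕ :=
  Nat.card {k : Fin N // bar b d j ⊂ bar b d k}
/-- The sublevel set `{x ∈ [0,1] : f x ≤ t}`. -/
def sublevel (f : ℝ → ℝ) (t : ℝ) : Set ℝ := {x | x ∈ Set.Icc (0:ℝ) 1 ∧ f x ≤ t}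

/-- The set of connected components of `A ⊆ ℝ` (maximal connected subsets). -/
def Components (A : Set ℝ) : Set (Set ℝ) := {C | ∃ x ∈ A, C = connectedComponentIn A x}

/-- The left-to-right strict order on subsets of `ℝ`:
`C` is entirely to the left of `D`. -/
def CompLT (C D : Set ℝ) : Prop := ∀ x ∈ C, ∀ y ∈ D, x < y

/-- `f` and `g` are graph-equivalent: there is an increasing homeomorphism
`φ : [0,1] → [0,1]` with `f = g ∘ φ` on `[0,1]`. -/
def GraphEquiv (f g : ℝ → ℝ) : Prop :=
  ∃ φ : ℝ → ℝ, ContinuousOn φ (Set.Icc 0 1) ∧ StrictMonoOn φ (Set.Icc 0 1) ∧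
    Set.MapsTo φ (Set.Icc 0 1) (Set.Icc 0 1) ∧
    Set.SurjOn φ (Set.Icc 0 1) (Set.Icc 0 1) ∧
    ∀ x ∈ Set.Icc (0:ℝ) 1, f x = g (φ x)

/-- `f : [0,1] → ℝ` is Morse-like: continuous, and there are
`0 = p₀ < p₁ < ⋯ < p_m = 1` such that `f` is strictly monotone on each
`[p_{i-1}, p_i]`, consecutive intervals have opposite directions of monotonicity,
and the values `f(p₀), …, f(p_m)` are pairwise distinct. -/
def MorseLike (f : ℝ → ℝ) : Prop :=
  ContinuousOn f (Set.Icc 0 1) ∧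
  ∃ (m : ℕ) (p : ℕ → ℝ), p 0 = 0 ∧ p m = 1 ∧ (∀ i < m, p i < p (i + 1)) ∧
    (∀ i < m, StrictMonoOn f (Set.Icc (p i) (p (i + 1))) ∨
      StrictAntiOn f (Set.Icc (p i) (p (i + 1)))) ∧
    (∀ i, i + 1 < m →
      (StrictMonoOn f (Set.Icc (p i) (p (i + 1))) ↔
        StrictAntiOn f (Set.Icc (p (i + 1)) (p (i + 2))))) ∧
    (∀ i j, i ≤ m → j ≤ m → i ≠ j → f (p i) ≠ f (p j))

/-- `f` realizes the barcode `B`: for all `r ≤ t`, the cardinality of the image of the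
inclusion-induced map on connected components of sublevel sets (i.e. the number of
components of `{f ≤ t}` containing some component of `{f ≤ r}`) equals the number of
intervals of `B` containing both `r` and `t`. -/
def RealizesBarcode (f : ℝ → ℝ) (B : Set (Set ℝ)) : Prop :=
  ∀ r t : ℝ, r ≤ t →
    {D | D ∈ Components (sublevel f t) ∧ ∃ C ∈ Components (sublevel f r), C ⊆ D}.ncard
      = {I | I ∈ B ∧ r ∈ I ∧ t ∈ I}.ncard

/-- `f` realizes the valid chiral merge tree `T`: for each `t` there is an
order-isomorphism `α t` from the components of `{f ≤ t}` (left-to-right order) to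
`S_T(t)` (in-order order), commuting with the inclusion-induced maps on components
and the shift maps `σ_{tr}` (which send each node to its unique ancestor in `S_T(t)`;
being an ancestor is expressed by the address being a prefix). -/
def RealizesCMT (f : ℝ → ℝ) (T : CMT) : Prop :=
  ∃ α : (t : ℝ) → {C : Set ℝ // C ∈ Components (sublevel f t)} →
      {w : List Bool // T.MemS t w},
    (∀ t : ℝ, Function.Bijective (α t)) ∧
    (∀ (t : ℝ) (C D : {C : Set ℝ // C ∈ Components (sublevel f t)}),
      CompLT C.1 D.1 ↔ T.InOrderLT (α t C).1 (α t D).1) ∧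
    (∀ r t : ℝ, r ≤ t →
      ∀ (C : {C : Set ℝ // C ∈ Components (sublevel f r)})
        (D : {C : Set ℝ // C ∈ Components (sublevel f t)}),
        C.1 ⊆ D.1 → (α t D).1 <+: (α r C).1)

/-- `f` is piecewise linear on `[0,1]`. -/
def PiecewiseLinear (f : ℝ → ℝ) : Prop :=
  ∃ (m : ℕ) (p : ℕ → ℝ), p 0 = 0 ∧ p m = 1 ∧ (∀ i < m, p i < p (i + 1)) ∧
    ∀ i < m, ∃ c e : ℝ, ∀ x ∈ Set.Icc (p i) (p (i + 1)), f x = c * x + e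
/-- The interval module `k_I` at time `t` is the `k`-vector space
`PLift (t ∈ I) → k` of functions from (proofs of) `t ∈ I` to `k`, which is
one-dimensional if `t ∈ I` and the zero space otherwise.  `intervalShift k I r t` is
its shift map `k_I(r) → k_I(t)`: the identity when `r, t ∈ I` and zero otherwise. -/
noncomputable def intervalShift (k : Type) [Field k] (I : Set ℝ) (r t : ℝ) :
    (PLift (r ∈ I) → k) →ₗ[k] (PLift (t ∈ I) → k) where
  toFun x := fun _ => if hr : r ∈ I then x ⟨hr⟩ else 0
  map_add' x y := by
    funext ht
    by_cases hr : r ∈ I <;> simp [hr]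
  map_smul' c x := by
    funext ht
    by_cases hr : r ∈ I <;> simp [hr]


namespace CMT

-- ### auxiliary lemmas

theorem subtree?_append (u : List Bool) : ∀ (T : CMT) (q : List Bool),
    T.subtree? (u ++ q) = (T.subtree? u).bind (fun s => s.subtree? q) := by
  induction u with
  | nil => intro T q; simp [subtree?]
  | cons b u ih =>
    intro T q
    cases T with
    | leaf a => simp [subtree?]
    | node a l r => cases b <;> simp [subtree?, ih]

theorem subtree?_prefix {T : CMT} {u w : List Bool} {s : CMT} (h : u <+: w)
    (hs : T.subtree? w = some s) : ∃ s', T.subtree? u = some s' := by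
  obtain ⟨q, rfl⟩ := h
  rw [subtree?_append] at hs
  cases h' : T.subtree? u with
  | none => rw [h'] at hs; simp at hs
  | some s' => exact ⟨s', rfl⟩

theorem localValid_subtree : ∀ (w : List Bool) (T : CMT) (s : CMT),
    T.LocalValid → T.subtree? w = some s → s.LocalValid := by
  intro w
  induction w with
  | nil => intro T s hv h; simp [subtree?] at h; exact h ▸ hv
  | cons b u ih =>
    intro T s hv h
    cases T with
    | leaf a => simp [subtree?] at h
    | node a l r =>
      cases b with
      | false => exact ih l s hv.2.2.1 h
      | true => exact ih r s hv.2.2.2 h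

theorem label_subtree_le : ∀ (w : List Bool) (T : CMT) (s : CMT),
    T.LocalValid → T.subtree? w = some s → s.label ≤ T.label := by
  intro w
  induction w with
  | nil => intro T s hv h; simp [subtree?] at h; exact le_of_eq (by rw [h])
  | cons b u ih =>
    intro T s hv h
    cases T with
    | leaf a => simp [subtree?] at h
    | node a l r =>
      cases b with
      | false => exact le_of_lt (lt_of_le_of_lt (ih l s hv.2.2.1 h) hv.1)
      | true => exact le_of_lt (lt_of_le_of_lt (ih r s hv.2.2.2 h) hv.2.1)

theorem minLeaf_le_label : ∀ (T : CMT), T.LocalValid → T.minLeaf ≤ T.label := by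
  intro T
  induction T with
  | leaf a => intro _; exact le_refl a
  | node a l r ihl ihr =>
    intro hv
    exact le_of_lt (lt_of_le_of_lt (le_trans (min_le_left _ _) (ihl hv.2.2.1)) hv.1)

theorem minLeaf_le_subtree : ∀ (w : List Bool) (T : CMT) (s : CMT),
    T.subtree? w = some s → T.minLeaf ≤ s.minLeaf := by
  intro w
  induction w with
  | nil => intro T s h; simp [subtree?] at h; rw [h]
  | cons b u ih =>
    intro T s h
    cases T with
    | leaf a => simp [subtree?] at h
    | node a l r =>
      cases b with
      | false => exact le_trans (min_le_left _ _) (ih l s h)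
      | true => exact le_trans (min_le_right _ _) (ih r s h)

theorem minLeaf_mem_leafLabels : ∀ (T : CMT), T.minLeaf ∈ T.leafLabels := by
  intro T
  induction T with
  | leaf a => exact rfl
  | node a l r ihl ihr =>
    rcases le_total l.minLeaf r.minLeaf with h | h
    · exact Or.inl (by rw [show (node a l r).minLeaf = l.minLeaf from min_eq_left h]; exact ihl)
    · exact Or.inr (by rw [show (node a l r).minLeaf = r.minLeaf from min_eq_right h]; exact ihr)

theorem leafLabels_mem_labelList : ∀ (T : CMT) (x : ℝ), x ∈ T.leafLabels → x ∈ T.labelList := by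
  intro T
  induction T with
  | leaf a => intro x hx; exact List.mem_singleton.2 hx
  | node a l r ihl ihr =>
    intro x hx
    rcases hx with hx | hx
    · exact List.mem_cons.2 (Or.inr (List.mem_append.2 (Or.inl (ihl x hx))))
    · exact List.mem_cons.2 (Or.inr (List.mem_append.2 (Or.inr (ihr x hx))))

theorem exists_leaf_addr : ∀ (T : CMT), ∃ q s, T.subtree? q = some s ∧ s.label = T.minLeaf := by
  intro T
  induction T with
  | leaf a => exact ⟨[], leaf a, rfl, rfl⟩
  | node a l r ihl ihr =>
    rcases le_total l.minLeaf r.minLeaf with h | h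
    · obtain ⟨q, s, hq, hs⟩ := ihl
      exact ⟨false :: q, s, hq, by rw [hs]; exact (min_eq_left h).symm⟩
    · obtain ⟨q, s, hq, hs⟩ := ihr
      exact ⟨true :: q, s, hq, by rw [hs]; exact (min_eq_right h).symm⟩


theorem memS_subtree {T : CMT} {t : ℝ} {w : List Bool} (h : T.MemS t w) :
    ∃ s, T.subtree? w = some s ∧ s.label ≤ t := by
  obtain ⟨⟨b, hb, hbt⟩, _⟩ := h
  rw [nodeLabel?, Option.map_eq_some_iff] at hb
  obtain ⟨s, hs, hsl⟩ := hb
  exact ⟨s, hs, hsl ▸ hbt⟩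

theorem memS_root {T : CMT} {t : ℝ} (h : T.label ≤ t) : T.MemS t [] :=
  ⟨⟨T.label, by simp [nodeLabel?, subtree?], h⟩, fun b hb => absurd rfl hb⟩

theorem memS_of_label_le {T : CMT} {t : ℝ} (hv : T.LocalValid) (h : T.label ≤ t)
    {w : List Bool} : T.MemS t w ↔ w = [] := by
  constructor
  · intro hm
    by_contra hw
    obtain ⟨s, hs, _⟩ := memS_subtree hm
    obtain ⟨s', hs'⟩ := subtree?_prefix (List.dropLast_prefix w) hs
    have h1 : t < s'.label :=
      hm.2 s'.label hw (by rw [nodeLabel?, hs', Option.map_some])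
    exact absurd (le_trans (label_subtree_le _ _ _ hv hs') h) (not_le.2 h1)
  · rintro rfl; exact memS_root h

theorem prefix_dropLast_of_ne {u w : List Bool} (h : u <+: w) (hne : u ≠ w) :
    u <+: w.dropLast := by
  obtain ⟨q, rfl⟩ := h
  have hq : q ≠ [] := by rintro rfl; exact hne (List.append_nil u).symm
  rw [List.dropLast_append_of_ne_nil hq]
  exact List.prefix_append u _

theorem ne_nil_of_strict_prefix {u w : List Bool} (h : u <+: w) (hne : u ≠ w) : w ≠ [] := by
  rintro rfl
  exact hne (List.prefix_nil.1 h)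

/-- labels decrease along descents, packaged for two comparable addresses. -/
theorem label_le_of_prefix {T : CMT} (hv : T.LocalValid) {u w : List Bool} {su sw : CMT}
    (h : u <+: w) (hu : T.subtree? u = some su) (hw : T.subtree? w = some sw) :
    sw.label ≤ su.label := by
  obtain ⟨q, rfl⟩ := h
  rw [subtree?_append, hu, Option.bind_some] at hw
  exact label_subtree_le q su sw (localValid_subtree u T su hv hu) hw

/-- uniqueness: comparable elements of `S_T(t)` are equal. -/
theorem memS_prefix_eq {T : CMT} (hv : T.LocalValid) {t : ℝ} {u w : List Bool}
    (hu : T.MemS t u) (hw : T.MemS t w) (h : u <+: w) : u = w := by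
  by_contra hne
  obtain ⟨su, hsu, hsut⟩ := memS_subtree hu
  obtain ⟨sw, hsw, _⟩ := memS_subtree hw
  obtain ⟨s', hs'⟩ := subtree?_prefix (List.dropLast_prefix w) hsw
  have h1 : t < s'.label :=
    hw.2 s'.label (ne_nil_of_strict_prefix h hne) (by rw [nodeLabel?, hs', Option.map_some])
  have h2 : s'.label ≤ su.label :=
    label_le_of_prefix hv (prefix_dropLast_of_ne h hne) hsu hs'
  exact absurd (le_trans h2 hsut) (not_le.2 h1)

theorem memS_node {a : ℝ} {l r : CMT} {t : ℝ} (ht : t < a) (w : List Bool) :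
    (node a l r).MemS t w ↔
      (∃ u, w = false :: u ∧ l.MemS t u) ∨ (∃ u, w = true :: u ∧ r.MemS t u) := by
  constructor
  · rintro ⟨⟨b, hb, hbt⟩, hpar⟩
    match w with
    | [] =>
      rw [nodeLabel?] at hb
      simp [subtree?, label] at hb
      exact absurd hbt (not_le.2 (hb ▸ ht))
    | (c : Bool) :: u =>
      have hfirst : ∃ b, nodeLabel? (if c then r else l) u = some b ∧ b ≤ t := by
        cases c <;> exact ⟨b, hb, hbt⟩
      have hsecond : ∀ b, u ≠ [] → nodeLabel? (if c then r else l) u.dropLast = some b → t < b := by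
        intro b hu hb'
        match u, hu with
        | (d : Bool) :: u', _ =>
          have : (node a l r).nodeLabel? ((c :: d :: u').dropLast) = some b := by
            rw [List.dropLast_cons₂]
            cases c <;> simpa [nodeLabel?, subtree?] using hb'
          exact hpar b (by simp) this
      cases c with
      | false => exact Or.inl ⟨u, rfl, hfirst, hsecond⟩
      | true => exact Or.inr ⟨u, rfl, hfirst, hsecond⟩
  · rintro (⟨u, rfl, ⟨⟨b, hb, hbt⟩, hpar⟩⟩ | ⟨u, rfl, ⟨⟨b, hb, hbt⟩, hpar⟩⟩) <;>
    · refine ⟨⟨b, hb, hbt⟩, ?_⟩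
      intro b' _ hb'
      match u with
      | [] =>
        simp [nodeLabel?, subtree?, label] at hb'
        exact hb' ▸ ht
      | d :: u' =>
        rw [List.dropLast_cons₂] at hb'
        refine hpar b' (by simp) ?_
        simpa [nodeLabel?, subtree?] using hb'

theorem exists_memS_prefix : ∀ (T : CMT) (q : List Bool) (s : CMT) {r : ℝ},
    T.subtree? q = some s → s.label ≤ r → ∃ v, T.MemS r v ∧ v <+: q := by
  intro T
  induction T with
  | leaf a =>
    intro q s r hq hs
    match q with
    | [] =>
      simp [subtree?] at hq
      exact ⟨[], memS_root (by rw [← hq] at hs; exact hs), List.nil_prefix⟩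
    | c :: u => simp [subtree?] at hq
  | node a l rr ihl ihr =>
    intro q s r hq hs
    by_cases har : a ≤ r
    · exact ⟨[], memS_root har, List.nil_prefix⟩
    · have hra : r < a := not_le.1 har
      match q with
      | [] =>
        simp [subtree?] at hq
        rw [← hq] at hs
        exact absurd hs har
      | false :: u =>
        obtain ⟨v, hv, hvp⟩ := ihl u s hq hs
        exact ⟨false :: v, (memS_node hra _).2 (Or.inl ⟨v, rfl, hv⟩), List.cons_prefix_cons.2 ⟨rfl, hvp⟩⟩
      | true :: u =>
        obtain ⟨v, hv, hvp⟩ := ihr u s hq hs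
        exact ⟨true :: v, (memS_node hra _).2 (Or.inr ⟨v, rfl, hv⟩), List.cons_prefix_cons.2 ⟨rfl, hvp⟩⟩


noncomputable def EF : CMT → Finset (Set ℝ)
  | leaf a => {Set.Ici a}
  | node a l r =>
      insert (Set.Ico (max l.minLeaf r.minLeaf) a)
        (((EF l) ∪ (EF r)).erase (Set.Ici (max l.minLeaf r.minLeaf)))

theorem elder_eq : ∀ T : CMT, T.Elder = ↑(EF T) := by
  intro T
  induction T with
  | leaf a => simp [Elder, EF]
  | node a l r ihl ihr =>
    simp only [Elder, EF, Finset.coe_insert, Finset.coe_erase, Finset.coe_union, ihl, ihr]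

theorem valid_left {a : ℝ} {l r : CMT} (h : (node a l r).Valid) : l.Valid := by
  refine ⟨?_, h.2.2.2.1⟩
  have := h.1
  simp only [labelList, List.nodup_cons, List.nodup_append] at this
  exact this.2.1

theorem valid_right {a : ℝ} {l r : CMT} (h : (node a l r).Valid) : r.Valid := by
  refine ⟨?_, h.2.2.2.2⟩
  have := h.1
  simp only [labelList, List.nodup_cons, List.nodup_append] at this
  exact this.2.2.1

theorem leafLabels_disjoint {a : ℝ} {l r : CMT} (h : (node a l r).Valid) :
    ∀ x, x ∈ l.leafLabels → x ∈ r.leafLabels → False := by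
  intro x hxl hxr
  have := h.1
  simp only [labelList, List.nodup_cons, List.nodup_append] at this
  exact this.2.2.2 x (leafLabels_mem_labelList l x hxl) x (leafLabels_mem_labelList r x hxr) rfl

theorem minLeaf_ne {a : ℝ} {l r : CMT} (h : (node a l r).Valid) : l.minLeaf ≠ r.minLeaf := by
  intro he
  exact leafLabels_disjoint h l.minLeaf (minLeaf_mem_leafLabels l) (he ▸ minLeaf_mem_leafLabels r)

theorem ici_ne_ico (a x y : ℝ) : Set.Ici a ≠ Set.Ico x y := by
  intro h
  have h1 : max a y ∈ Set.Ici a := Set.mem_Ici.2 (le_max_left _ _)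
  rw [h] at h1
  exact absurd h1.2 (not_lt.2 (le_max_right a y))

/-- Structure of bars of the Elder barcode. -/
theorem elderSpec : ∀ T : CMT, T.LocalValid → ∀ I ∈ EF T,
    I = Set.Ici T.minLeaf ∨
      ∃ x y, x ∈ T.leafLabels ∧ x < y ∧ y ≤ T.label ∧ I = Set.Ico x y := by
  intro T
  induction T with
  | leaf a => intro _ I hI; left; rw [Finset.mem_singleton.1 hI]; rfl
  | node a l r ihl ihr =>
    intro hv I hI
    have hmla : l.minLeaf < a :=
      lt_of_le_of_lt (minLeaf_le_label l hv.2.2.1) hv.1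
    have hmra : r.minLeaf < a :=
      lt_of_le_of_lt (minLeaf_le_label r hv.2.2.2) hv.2.1
    rw [EF, Finset.mem_insert] at hI
    rcases hI with hI | hI
    · right
      refine ⟨max l.minLeaf r.minLeaf, a, ?_, max_lt hmla hmra, le_refl _, hI⟩
      rcases le_total l.minLeaf r.minLeaf with h | h
      · rw [max_eq_right h]; exact Or.inr (minLeaf_mem_leafLabels r)
      · rw [max_eq_left h]; exact Or.inl (minLeaf_mem_leafLabels l)
    · obtain ⟨hne, hI⟩ := Finset.mem_erase.1 hI
      rcases Finset.mem_union.1 hI with hI | hI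
      · rcases ihl hv.2.2.1 I hI with h | ⟨x, y, hx, hxy, hyl, hIxy⟩
        · left
          subst h
          have hlr : l.minLeaf ≤ r.minLeaf := by
            by_contra hc
            exact hne (by rw [max_eq_left (le_of_lt (not_le.1 hc))])
          rw [show (node a l r).minLeaf = l.minLeaf from min_eq_left hlr]
        · exact Or.inr ⟨x, y, Or.inl hx, hxy, le_of_lt (lt_of_le_of_lt hyl hv.1), hIxy⟩
      · rcases ihr hv.2.2.2 I hI with h | ⟨x, y, hx, hxy, hyl, hIxy⟩
        · left
          subst h
          have hlr : r.minLeaf ≤ l.minLeaf := by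
            by_contra hc
            exact hne (by rw [max_eq_right (le_of_lt (not_le.1 hc))])
          rw [show (node a l r).minLeaf = r.minLeaf from min_eq_right hlr]
        · exact Or.inr ⟨x, y, Or.inr hx, hxy, le_of_lt (lt_of_le_of_lt hyl hv.2.1), hIxy⟩

/-- The unbounded bar is always present. -/
theorem ici_minLeaf_mem : ∀ T : CMT, T.Valid → Set.Ici T.minLeaf ∈ EF T := by
  intro T
  induction T with
  | leaf a => intro _; exact Finset.mem_singleton_self _
  | node a l r ihl ihr =>
    intro hv
    have hne := minLeaf_ne hv
    rcases lt_or_gt_of_ne hne with h | h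
    · have hmin : (node a l r).minLeaf = l.minLeaf := min_eq_left (le_of_lt h)
      have hmax : max l.minLeaf r.minLeaf = r.minLeaf := max_eq_right (le_of_lt h)
      rw [EF, hmin, hmax]
      refine Finset.mem_insert_of_mem (Finset.mem_erase.2 ⟨?_, Finset.mem_union_left _ (ihl (valid_left hv))⟩)
      intro hc
      exact absurd (Set.Ici_injective (by exact hc)) (ne_of_lt h)
    · have hmin : (node a l r).minLeaf = r.minLeaf := min_eq_right (le_of_lt h)
      have hmax : max l.minLeaf r.minLeaf = l.minLeaf := max_eq_left (le_of_lt h)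
      rw [EF, hmin, hmax]
      refine Finset.mem_insert_of_mem (Finset.mem_erase.2 ⟨?_, Finset.mem_union_right _ (ihr (valid_right hv))⟩)
      intro hc
      exact absurd (Set.Ici_injective (by exact hc)) (ne_of_lt h)

theorem ef_disjoint {a : ℝ} {l r : CMT} (hv : (node a l r).Valid) :
    Disjoint (EF l) (EF r) := by
  rw [Finset.disjoint_left]
  intro I h1 h2
  rcases elderSpec l hv.2.2.2.1 I h1 with hI1 | ⟨x, y, hx, hxy, _, hI1⟩ <;>
    rcases elderSpec r hv.2.2.2.2 I h2 with hI2 | ⟨x', y', hx', hxy', _, hI2⟩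
  · exact leafLabels_disjoint hv l.minLeaf (minLeaf_mem_leafLabels l)
      ((Set.Ici_injective (hI1 ▸ hI2)) ▸ minLeaf_mem_leafLabels r)
  · exact ici_ne_ico _ _ _ (hI1 ▸ hI2)
  · exact ici_ne_ico _ _ _ (hI2 ▸ hI1)
  · obtain ⟨hxx, -⟩ := (Set.Ico_eq_Ico_iff (Or.inl hxy)).1 (hI1 ▸ hI2)
    exact leafLabels_disjoint hv x hx (hxx ▸ hx')


/-- Finset version of `{w ∈ S_T(t) | minLeaf(subtree at w) ≤ r}`. -/
noncomputable def SF (r t : ℝ) : CMT → Finset (List Bool)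
  | leaf a => if a ≤ r then {[]} else ∅
  | node a l rr =>
      if a ≤ t then (if min l.minLeaf rr.minLeaf ≤ r then {[]} else ∅)
      else (SF r t l).image (List.cons false) ∪ (SF r t rr).image (List.cons true)

theorem setEq : ∀ (T : CMT), T.Valid → ∀ {r t : ℝ}, r ≤ t →
    {w : List Bool | T.MemS t w ∧ ∃ s, T.subtree? w = some s ∧ s.minLeaf ≤ r}
      = ↑(SF r t T) := by
  intro T
  induction T with
  | leaf a =>
    intro _ r t hrt
    ext w
    simp only [Set.mem_setOf_eq, Finset.coe_sort_coe, SF, Finset.mem_coe]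
    constructor
    · rintro ⟨hm, s, hs, hsr⟩
      match w with
      | [] =>
        simp only [subtree?, Option.some_inj] at hs
        subst hs
        simp only [minLeaf] at hsr
        rw [if_pos hsr]
        exact Finset.mem_singleton_self _
      | c :: u => simp [subtree?] at hs
    · intro hw
      by_cases har : a ≤ r
      · rw [if_pos har, Finset.mem_singleton] at hw
        subst hw
        exact ⟨memS_root (le_trans har hrt), leaf a, rfl, har⟩
      · rw [if_neg har] at hw
        exact absurd hw (Finset.notMem_empty _)
  | node a l rr ihl ihr =>
    intro hv r t hrt
    by_cases hat : a ≤ t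
    · ext w
      simp only [Set.mem_setOf_eq, Finset.coe_sort_coe, SF, if_pos hat, Finset.mem_coe]
      constructor
      · rintro ⟨hm, s, hs, hsr⟩
        have hw : w = [] := (memS_of_label_le hv.2 hat).1 hm
        subst hw
        simp only [subtree?, Option.some_inj] at hs
        subst hs
        simp only [minLeaf] at hsr
        rw [if_pos hsr]
        exact Finset.mem_singleton_self _
      · intro hw
        by_cases hmr : min l.minLeaf rr.minLeaf ≤ r
        · rw [if_pos hmr, Finset.mem_singleton] at hw
          subst hw
          exact ⟨memS_root hat, node a l rr, rfl, hmr⟩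
        · rw [if_neg hmr] at hw
          exact absurd hw (Finset.notMem_empty _)
    · have hta : t < a := not_le.1 hat
      ext w
      simp only [Set.mem_setOf_eq, Finset.coe_sort_coe, SF, if_neg hat, Finset.mem_coe,
        Finset.mem_union, Finset.mem_image]
      constructor
      · rintro ⟨hm, s, hs, hsr⟩
        rcases (memS_node hta w).1 hm with ⟨u, rfl, hu⟩ | ⟨u, rfl, hu⟩
        · refine Or.inl ⟨u, ?_, rfl⟩
          have : u ∈ ({w : List Bool | l.MemS t w ∧ ∃ s, l.subtree? w = some s ∧ s.minLeaf ≤ r}) :=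
            ⟨hu, s, hs, hsr⟩
          rw [ihl (valid_left hv) hrt] at this
          exact this
        · refine Or.inr ⟨u, ?_, rfl⟩
          have : u ∈ ({w : List Bool | rr.MemS t w ∧ ∃ s, rr.subtree? w = some s ∧ s.minLeaf ≤ r}) :=
            ⟨hu, s, hs, hsr⟩
          rw [ihr (valid_right hv) hrt] at this
          exact this
      · rintro (⟨u, hu, rfl⟩ | ⟨u, hu, rfl⟩)
        · have : u ∈ ({w : List Bool | l.MemS t w ∧ ∃ s, l.subtree? w = some s ∧ s.minLeaf ≤ r}) := by
            rw [ihl (valid_left hv) hrt]; exact hu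
          obtain ⟨hm, s, hs, hsr⟩ := this
          exact ⟨(memS_node hta _).2 (Or.inl ⟨u, rfl, hm⟩), s, hs, hsr⟩
        · have : u ∈ ({w : List Bool | rr.MemS t w ∧ ∃ s, rr.subtree? w = some s ∧ s.minLeaf ≤ r}) := by
            rw [ihr (valid_right hv) hrt]; exact hu
          obtain ⟨hm, s, hs, hsr⟩ := this
          exact ⟨(memS_node hta _).2 (Or.inr ⟨u, rfl, hm⟩), s, hs, hsr⟩


theorem cardEq : ∀ (T : CMT), T.Valid → ∀ {r t : ℝ}, r ≤ t →
    (SF r t T).card = ((EF T).filter (fun I => r ∈ I ∧ t ∈ I)).card := by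
  intro T
  induction T with
  | leaf a =>
    intro _ r t hrt
    by_cases har : a ≤ r
    · rw [SF, if_pos har, EF, Finset.filter_singleton,
        if_pos ⟨har, le_trans har hrt⟩]
      simp
    · rw [SF, if_neg har, EF, Finset.filter_singleton,
        if_neg (fun h => har h.1)]
      simp
  | node a l rr ihl ihr =>
    intro hv r t hrt
    set M := max l.minLeaf rr.minLeaf with hM
    have hvl := valid_left hv
    have hvr := valid_right hv
    have hMa : M < a :=
      max_lt (lt_of_le_of_lt (minLeaf_le_label l hv.2.2.2.1) hv.2.1)
        (lt_of_le_of_lt (minLeaf_le_label rr hv.2.2.2.2) hv.2.2.1)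
    by_cases hat : a ≤ t
    · -- everything collapses to the (possible) single unbounded bar
      have hfil : (EF (node a l rr)).filter (fun I => r ∈ I ∧ t ∈ I)
          = if min l.minLeaf rr.minLeaf ≤ r then {Set.Ici (node a l rr).minLeaf} else ∅ := by
        ext I
        simp only [Finset.mem_filter]
        constructor
        · rintro ⟨hI, hrI, htI⟩
          rcases elderSpec _ hv.2 I hI with hI1 | ⟨x, y, _, _, hyl, hI1⟩
          · subst hI1
            have hthis : min l.minLeaf rr.minLeaf ≤ r := hrI
            rw [if_pos hthis]
            exact Finset.mem_singleton_self _
          · subst hI1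
            exact absurd (lt_of_lt_of_le htI.2 hyl) (not_lt.2 hat)
        · intro hI
          by_cases hmr : min l.minLeaf rr.minLeaf ≤ r
          · rw [if_pos hmr, Finset.mem_singleton] at hI
            subst hI
            refine ⟨ici_minLeaf_mem _ hv, hmr, le_trans hmr hrt⟩
          · rw [if_neg hmr] at hI
            exact absurd hI (Finset.notMem_empty _)
      rw [SF, if_pos hat, hfil]
      by_cases hmr : min l.minLeaf rr.minLeaf ≤ r <;> simp [hmr]
    · have hta : t < a := not_le.1 hat
      have hIcoMem : r ∈ Set.Ico M a ∧ t ∈ Set.Ico M a ↔ M ≤ r := by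
        constructor
        · rintro ⟨h1, _⟩; exact h1.1
        · intro h; exact ⟨⟨h, lt_of_le_of_lt hrt hta⟩, ⟨le_trans h hrt, hta⟩⟩
      have hIciMem : r ∈ Set.Ici M ∧ t ∈ Set.Ici M ↔ M ≤ r := by
        constructor
        · rintro ⟨h1, _⟩; exact h1
        · intro h; exact ⟨h, le_trans h hrt⟩
      have hMmem : Set.Ici M ∈ EF l ∪ EF rr := by
        rcases le_total l.minLeaf rr.minLeaf with h | h
        · rw [hM, max_eq_right h]
          exact Finset.mem_union_right _ (ici_minLeaf_mem _ hvr)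
        · rw [hM, max_eq_left h]
          exact Finset.mem_union_left _ (ici_minLeaf_mem _ hvl)
      have hIcoNot : Set.Ico M a ∉ EF l ∪ EF rr := by
        intro hc
        have hspec : Set.Ico M a = Set.Ici l.minLeaf ∨ Set.Ico M a = Set.Ici rr.minLeaf ∨
            ∃ x y : ℝ, x < y ∧ y < a ∧ Set.Ico M a = Set.Ico x y := by
          rcases Finset.mem_union.1 hc with hc | hc
          · rcases elderSpec _ hv.2.2.2.1 _ hc with h1 | ⟨x, y, _, hxy, hyl, h1⟩
            · exact Or.inl h1
            · exact Or.inr (Or.inr ⟨x, y, hxy, lt_of_le_of_lt hyl hv.2.1, h1⟩)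
          · rcases elderSpec _ hv.2.2.2.2 _ hc with h1 | ⟨x, y, _, hxy, hyl, h1⟩
            · exact Or.inr (Or.inl h1)
            · exact Or.inr (Or.inr ⟨x, y, hxy, lt_of_le_of_lt hyl hv.2.2.1, h1⟩)
        rcases hspec with h1 | h1 | ⟨x, y, hxy, hya, h1⟩
        · exact ici_ne_ico _ _ _ h1.symm
        · exact ici_ne_ico _ _ _ h1.symm
        · obtain ⟨-, hy⟩ := (Set.Ico_eq_Ico_iff (Or.inl hMa)).1 h1
          exact absurd hya (by rw [← hy]; exact lt_irrefl a)
      -- compute the filter cardinality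
      have hunion : ((EF l ∪ EF rr).filter (fun I => r ∈ I ∧ t ∈ I)).card
          = ((EF l).filter (fun I => r ∈ I ∧ t ∈ I)).card
            + ((EF rr).filter (fun I => r ∈ I ∧ t ∈ I)).card := by
        rw [Finset.filter_union]
        exact Finset.card_union_of_disjoint
          (Finset.disjoint_filter_filter (ef_disjoint hv))
      have hkey : ((EF (node a l rr)).filter (fun I => r ∈ I ∧ t ∈ I)).card
          = ((EF l ∪ EF rr).filter (fun I => r ∈ I ∧ t ∈ I)).card := by
        rw [EF, Finset.filter_insert, Finset.filter_erase]
        by_cases hMr : M ≤ r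
        · rw [if_pos (hIcoMem.2 hMr)]
          have hIciFil : Set.Ici M ∈ (EF l ∪ EF rr).filter (fun I => r ∈ I ∧ t ∈ I) :=
            Finset.mem_filter.2 ⟨hMmem, hIciMem.2 hMr⟩
          rw [Finset.card_insert_of_notMem
            (fun hc => hIcoNot (Finset.mem_filter.1 (Finset.mem_of_mem_erase hc)).1)]
          rw [Finset.card_erase_of_mem hIciFil]
          have hpos : 1 ≤ ((EF l ∪ EF rr).filter (fun I => r ∈ I ∧ t ∈ I)).card :=
            Finset.card_pos.2 ⟨_, hIciFil⟩
          omega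
        · rw [if_neg (fun hc => hMr (hIcoMem.1 hc))]
          congr 1
          exact Finset.erase_eq_of_notMem
            (fun hc => hMr (hIciMem.1 (Finset.mem_filter.1 hc).2))
      have himg : (SF r t (node a l rr)).card = (SF r t l).card + (SF r t rr).card := by
        rw [SF, if_neg hat]
        rw [Finset.card_union_of_disjoint]
        · rw [Finset.card_image_of_injective _ (fun _ _ h => (List.cons.inj h).2),
            Finset.card_image_of_injective _ (fun _ _ h => (List.cons.inj h).2)]
        · rw [Finset.disjoint_left]
          rintro w hw1 hw2
          obtain ⟨u, -, rfl⟩ := Finset.mem_image.1 hw1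
          obtain ⟨u', -, hc⟩ := Finset.mem_image.1 hw2
          exact Bool.false_ne_true ((List.cons.inj hc).1).symm
      rw [himg, hkey, hunion, ihl hvl hrt, ihr hvr hrt]

end CMT

/-- `|S_T(t)|` equals the number of bars of `Elder T` containing
`t`, and the cardinality of the image of the shift map `σ_{tr} : S_T(r) → S_T(t)`
(which sends each node to its unique ancestor, i.e. prefix, in `S_T(t)`) equals the
number of bars of `Elder T` containing both `r` and `t`. -/
theorem card_S_and_image_of_shift (T : CMT) (hT : T.Valid) (r t : ℝ) (hrt : r ≤ t)
    (σ : {w : List Bool // T.MemS r w} → {w : List Bool // T.MemS t w})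
    (hσ : ∀ v, (σ v).1 <+: v.1) :
    Nat.card {w : List Bool // T.MemS t w} = {I | I ∈ T.Elder ∧ t ∈ I}.ncard ∧
    (Set.range σ).ncard = {I | I ∈ T.Elder ∧ r ∈ I ∧ t ∈ I}.ncard := by
  have hv := hT.2
  constructor
  · have h1 : {w : List Bool | T.MemS t w}
        = {w : List Bool | T.MemS t w ∧ ∃ s, T.subtree? w = some s ∧ s.minLeaf ≤ t} := by
      ext w
      refine ⟨fun hm => ⟨hm, ?_⟩, fun h => h.1⟩
      obtain ⟨s, hs, hst⟩ := CMT.memS_subtree hm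
      exact ⟨s, hs, le_trans (CMT.minLeaf_le_label s (CMT.localValid_subtree w T s hv hs)) hst⟩
    have h2 : {I | I ∈ T.Elder ∧ t ∈ I} = ↑((CMT.EF T).filter (fun I => t ∈ I ∧ t ∈ I)) := by
      ext I
      simp [CMT.elder_eq]
    calc Nat.card {w : List Bool // T.MemS t w}
        = {w : List Bool | T.MemS t w}.ncard := Nat.card_coe_set_eq {w | T.MemS t w}
      _ = (CMT.SF t t T).card := by
          rw [h1, CMT.setEq T hT (le_refl t), Set.ncard_coe_finset]
      _ = ((CMT.EF T).filter (fun I => t ∈ I ∧ t ∈ I)).card := CMT.cardEq T hT (le_refl t)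
      _ = {I | I ∈ T.Elder ∧ t ∈ I}.ncard := by rw [h2, Set.ncard_coe_finset]
  · have himg : (Subtype.val '' Set.range σ)
        = {w : List Bool | T.MemS t w ∧ ∃ s, T.subtree? w = some s ∧ s.minLeaf ≤ r} := by
      ext w
      constructor
      · rintro ⟨x, ⟨v, rfl⟩, rfl⟩
        refine ⟨(σ v).2, ?_⟩
        obtain ⟨q, hq⟩ := hσ v
        obtain ⟨sv, hsv, hsvr⟩ := CMT.memS_subtree v.2
        have hlv : sv.LocalValid := CMT.localValid_subtree _ T sv hv hsv
        have hsv' := hsv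
        rw [← hq, CMT.subtree?_append] at hsv'
        cases hw : T.subtree? (σ v).1 with
        | none => rw [hw] at hsv'; simp at hsv'
        | some s =>
          rw [hw, Option.bind_some] at hsv'
          exact ⟨s, rfl, le_trans (CMT.minLeaf_le_subtree q s sv hsv')
            (le_trans (CMT.minLeaf_le_label sv hlv) hsvr)⟩
      · rintro ⟨hw, s, hs, hsr⟩
        obtain ⟨q, s', hq, hq'⟩ := CMT.exists_leaf_addr s
        have hsub : T.subtree? (w ++ q) = some s' := by
          rw [CMT.subtree?_append, hs, Option.bind_some, hq]
        have hs'r : s'.label ≤ r := by rw [hq']; exact hsr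
        obtain ⟨v, hvmem, hvpre⟩ := CMT.exists_memS_prefix T (w ++ q) s' hsub hs'r
        have hwv : w <+: v := by
          rcases List.prefix_or_prefix_of_prefix hvpre (List.prefix_append w q) with h | h
          · by_cases hvw : v = w
            · exact hvw ▸ List.prefix_refl v
            · exfalso
              obtain ⟨sv, hsv, hsvr⟩ := CMT.memS_subtree hvmem
              obtain ⟨s'', hs''⟩ := CMT.subtree?_prefix (List.dropLast_prefix w) hs
              have h1 : t < s''.label := hw.2 s''.label
                (CMT.ne_nil_of_strict_prefix h hvw)
                (by rw [CMT.nodeLabel?, hs'', Option.map_some])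
              have h2 : s''.label ≤ sv.label :=
                CMT.label_le_of_prefix hv (CMT.prefix_dropLast_of_ne h hvw) hsv hs''
              exact absurd (le_trans h2 (le_trans hsvr hrt)) (not_le.2 h1)
          · exact h
        have hfin : (σ ⟨v, hvmem⟩).1 = w := by
          rcases List.prefix_or_prefix_of_prefix (hσ ⟨v, hvmem⟩) hwv with h | h
          · exact CMT.memS_prefix_eq hv (σ ⟨v, hvmem⟩).2 hw h
          · exact (CMT.memS_prefix_eq hv hw (σ ⟨v, hvmem⟩).2 h).symm
        exact ⟨σ ⟨v, hvmem⟩, Set.mem_range_self _, hfin⟩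
    calc (Set.range σ).ncard
        = (Subtype.val '' Set.range σ).ncard :=
          (Set.ncard_image_of_injective _ Subtype.val_injective).symm
      _ = (CMT.SF r t T).card := by
          rw [himg, CMT.setEq T hT hrt, Set.ncard_coe_finset]
      _ = ((CMT.EF T).filter (fun I => r ∈ I ∧ t ∈ I)).card := CMT.cardEq T hT hrt
      _ = {I | I ∈ T.Elder ∧ r ∈ I ∧ t ∈ I}.ncard := by
          have h2 : {I | I ∈ T.Elder ∧ r ∈ I ∧ t ∈ I}
              = ↑((CMT.EF T).filter (fun I => r ∈ I ∧ t ∈ I)) := by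
            ext I
            simp [CMT.elder_eq]
          rw [h2, Set.ncard_coe_finset]
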